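/- arXiv:2605.18425 — 2 statements merged into one kernel-verified Lean document; each statement's English description precedes it below -/
import Mathlib

section
/- Let ξ, ξ' ∈ H^D. Then the function f: [0,1]^d → ℝ, f(y) = log(ξ(y)/ξ'(y)), is well-defined and continuously differentiable, and its derivative satisfies sup_{y∈[0,1]^d} ‖Df(y)‖₂ ≤ (C₁/B² + √d/B) ‖ξ − ξ'‖_{C¹}, where ‖g‖_{C¹} = max_{|β| ≤ 1} sup_{y} |D_β g(y)|. -/
open MeasureTheory Real Set
open scoped ENNReal NNReal

noncomputable section

abbrev Euc (d : ℕ) := EuclideanSpace ℝ (Fin d)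

def cube (d : ℕ) : Set (Euc d) := {x | ∀ i, x i ∈ Set.Icc (0:ℝ) 1}

def HolderNormLE {E F : Type*} [NormedAddCommGroup E] [NormedSpace ℝ E]
    [NormedAddCommGroup F] [NormedSpace ℝ F] (k : ℕ) (α Kb : ℝ) (f : E → F) (A : Set E) :
    Prop :=
  ContDiffOn ℝ k f A ∧
  ∃ a b : ℝ, 0 ≤ a ∧ 0 ≤ b ∧ a + b ≤ Kb ∧
    (∀ i ≤ k, ∀ x ∈ A, ‖iteratedFDerivWithin ℝ i f A x‖ ≤ a) ∧
    (∀ x ∈ A, ∀ y ∈ A,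
      ‖iteratedFDerivWithin ℝ k f A x - iteratedFDerivWithin ℝ k f A y‖ ≤ b * ‖x - y‖ ^ α)

/-- The discriminator hypothesis space `H^D`. -/
def memHD (d k : ℕ) (α B C₁ C₂ : ℝ) (ξ : Euc d → ℝ) : Prop :=
  (∀ y ∈ cube d, ξ y ∈ Set.Ioo (0:ℝ) 1) ∧
  (∀ y ∈ cube d, B ≤ ξ y ∧ ξ y ≤ 1 - B) ∧
  (∀ y ∈ cube d, ‖fderivWithin ℝ ξ (cube d) y‖ ≤ C₁) ∧
  HolderNormLE (k - 1) α C₂ ξ (cube d)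

/-- The `C¹`-norm `‖g‖_{C¹} = max_{|β| ≤ 1} sup_{x ∈ A} |D_β g(x)|` on a set `A`. -/
def C1normOn {d : ℕ} {F : Type*} [NormedAddCommGroup F] [NormedSpace ℝ F]
    (f : Euc d → F) (A : Set (Euc d)) : ℝ :=
  max (⨆ x : A, ‖f x.1‖)
    (⨆ i : Fin d, ⨆ x : A, ‖fderivWithin ℝ f A x.1 (EuclideanSpace.single i 1)‖)


open scoped RealInnerProductSpace

lemma convex_cube (d : ℕ) : Convex ℝ (cube d) := by
  intro x hx y hy a b ha hb hab i
  have : (a • x + b • y) i = a * x i + b * y i := rfl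
  rw [this]
  exact convex_Icc (0:ℝ) 1 (hx i) (hy i) ha hb hab

lemma uniqueDiffOn_cube (d : ℕ) : UniqueDiffOn ℝ (cube d) := by
  apply uniqueDiffOn_convex (convex_cube d)
  refine ⟨WithLp.toLp 2 (fun _ => 1/2 : Fin d → ℝ), ?_⟩
  rw [mem_interior]
  refine ⟨⋂ i, EuclideanSpace.proj (𝕜 := ℝ) i ⁻¹' Set.Ioo 0 1, ?_, ?_, ?_⟩
  · intro z hz i
    simp only [Set.mem_iInter] at hz
    exact Set.Ioo_subset_Icc_self (hz i)
  · exact isOpen_iInter_of_finite fun i => isOpen_Ioo.preimage (EuclideanSpace.proj i).continuous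
  · simp only [Set.mem_iInter, Set.mem_preimage]
    intro i
    norm_num [EuclideanSpace.proj]

lemma opnorm_le_sqrt {d : ℕ} (L : Euc d →L[ℝ] ℝ) {M : ℝ} (hM : 0 ≤ M)
    (h : ∀ i, ‖L (EuclideanSpace.single i 1)‖ ≤ M) : ‖L‖ ≤ Real.sqrt d * M := by
  refine ContinuousLinearMap.opNorm_le_bound _ (by positivity) fun v => ?_
  set c : Euc d := WithLp.toLp 2 (fun i => L (EuclideanSpace.single i 1) : Fin d → ℝ) with hc
  have hLv : L v = ⟪c, v⟫ := by
    have hv : v = ∑ i, v i • EuclideanSpace.single (𝕜 := ℝ) i 1 := by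
      have := (EuclideanSpace.basisFun (Fin d) ℝ).sum_repr v
      simp only [EuclideanSpace.basisFun_apply, EuclideanSpace.basisFun_repr] at this
      exact this.symm
    rw [PiLp.inner_apply]
    conv_lhs => rw [hv]
    simp [hc, mul_comm]
  have hcn : ‖c‖ ≤ Real.sqrt d * M := by
    rw [EuclideanSpace.norm_eq]
    have : ∑ i, ‖c i‖ ^ 2 ≤ (d : ℝ) * M ^ 2 := by
      calc ∑ i, ‖c i‖ ^ 2 ≤ ∑ _i : Fin d, M ^ 2 := by
            apply Finset.sum_le_sum
            intro i _
            have : ‖c i‖ ≤ M := h i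
            nlinarith [norm_nonneg (c i)]
        _ = (d : ℝ) * M ^ 2 := by simp
    calc Real.sqrt (∑ i, ‖c i‖ ^ 2) ≤ Real.sqrt ((d : ℝ) * M ^ 2) := Real.sqrt_le_sqrt this
      _ = Real.sqrt d * M := by
          rw [Real.sqrt_mul (by positivity), Real.sqrt_sq hM]
  rw [hLv]
  calc ‖(⟪c, v⟫ : ℝ)‖ ≤ ‖c‖ * ‖v‖ := norm_inner_le_norm c v
    _ ≤ Real.sqrt d * M * ‖v‖ := by gcongr

/-- **Derivative bound for the helper function** `f(y) = log(ξ(y)/ξ'(y))`: `f` is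
well-defined and continuously differentiable on the cube, with
`sup_y ‖Df(y)‖₂ ≤ (C₁/B² + √d/B)‖ξ − ξ'‖_{C¹}`. -/
theorem statement9 {d k : ℕ} (hd : 0 < d) (hk : 2 ≤ k) {α B C₁ C₂ : ℝ}
    (hα : α ∈ Set.Ioc (0:ℝ) 1) (hB : B ∈ Set.Ioo (0:ℝ) (1/2)) (hC₁ : 0 < C₁)
    (hC₂ : 0 < C₂) (ξ ξ' : Euc d → ℝ)
    (hξ : memHD d k α B C₁ C₂ ξ) (hξ' : memHD d k α B C₁ C₂ ξ') :
    (∀ y ∈ cube d, 0 < ξ y / ξ' y) ∧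
    ContDiffOn ℝ 1 (fun y => Real.log (ξ y / ξ' y)) (cube d) ∧
    ∀ y ∈ cube d,
      ‖fderivWithin ℝ (fun y => Real.log (ξ y / ξ' y)) (cube d) y‖ ≤
        (C₁ / B ^ 2 + Real.sqrt d / B) * C1normOn (fun y => ξ y - ξ' y) (cube d) := by
  obtain ⟨hB0, hB2⟩ := hB
  obtain ⟨-, hξbd, hξD, hξsm', -⟩ := hξ
  obtain ⟨-, hξ'bd, hξ'D, hξ'sm', -⟩ := hξ'
  set s := cube d with hs
  have hUD : UniqueDiffOn ℝ s := uniqueDiffOn_cube d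
  have hpos : ∀ y ∈ s, 0 < ξ y := fun y hy => lt_of_lt_of_le hB0 (hξbd y hy).1
  have hpos' : ∀ y ∈ s, 0 < ξ' y := fun y hy => lt_of_lt_of_le hB0 (hξ'bd y hy).1
  have hdivpos : ∀ y ∈ s, 0 < ξ y / ξ' y := fun y hy => div_pos (hpos y hy) (hpos' y hy)
  have h1k : (1 : WithTop ℕ∞) ≤ ((k - 1 : ℕ) : WithTop ℕ∞) := by
    have : 1 ≤ k - 1 := by omega
    exact_mod_cast this
  have hξsm : ContDiffOn ℝ 1 ξ s := hξsm'.of_le h1k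
  have hξ'sm : ContDiffOn ℝ 1 ξ' s := hξ'sm'.of_le h1k
  have hdiff : DifferentiableOn ℝ ξ s := hξsm.differentiableOn one_ne_zero
  have hdiff' : DifferentiableOn ℝ ξ' s := hξ'sm.differentiableOn one_ne_zero
  have hcd : ContDiffOn ℝ 1 (fun y => Real.log (ξ y / ξ' y)) s :=
    (hξsm.div hξ'sm fun x hx => (hpos' x hx).ne').log fun x hx => (hdivpos x hx).ne'
  refine ⟨hdivpos, hcd, ?_⟩
  intro y hy
  set N := C1normOn (fun y => ξ y - ξ' y) s with hN
  -- bounds from the C1 norm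
  have hvbdd : BddAbove (Set.range fun x : s => ‖ξ x.1 - ξ' x.1‖) := by
    refine ⟨1, ?_⟩
    rintro - ⟨⟨z, hz⟩, rfl⟩
    have h1 := hξbd z hz; have h2 := hξ'bd z hz
    show ‖ξ z - ξ' z‖ ≤ 1
    rw [Real.norm_eq_abs, abs_sub_le_iff]
    constructor <;> linarith
  have hval : ∀ z ∈ s, |ξ z - ξ' z| ≤ N := by
    intro z hz
    have := le_ciSup hvbdd (⟨z, hz⟩ : s)
    exact le_trans this (le_max_left _ _)
  have hN0 : 0 ≤ N := le_trans (abs_nonneg _) (hval y hy)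
  have hDsub : ∀ z ∈ s, fderivWithin ℝ (fun y => ξ y - ξ' y) s z
      = fderivWithin ℝ ξ s z - fderivWithin ℝ ξ' s z := fun z hz =>
    fderivWithin_sub (hUD z hz) (hdiff z hz) (hdiff' z hz)
  have hdbdd : ∀ i : Fin d, BddAbove (Set.range fun x : s =>
      ‖fderivWithin ℝ (fun y => ξ y - ξ' y) s x.1 (EuclideanSpace.single i 1)‖) := by
    intro i
    refine ⟨2 * C₁, ?_⟩
    rintro - ⟨⟨z, hz⟩, rfl⟩
    calc ‖fderivWithin ℝ (fun y => ξ y - ξ' y) s z (EuclideanSpace.single i 1)‖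
        ≤ ‖fderivWithin ℝ (fun y => ξ y - ξ' y) s z‖ * ‖(EuclideanSpace.single i 1 : Euc d)‖ :=
          ContinuousLinearMap.le_opNorm _ _
      _ ≤ (C₁ + C₁) * 1 := by
          apply mul_le_mul _ _ (norm_nonneg _) (by linarith)
          · rw [hDsub z hz]
            exact le_trans (norm_sub_le _ _) (add_le_add (hξD z hz) (hξ'D z hz))
          · rw [EuclideanSpace.norm_single]; simp
      _ = 2 * C₁ := by ring
  have hder : ∀ i : Fin d,
      ‖fderivWithin ℝ (fun y => ξ y - ξ' y) s y (EuclideanSpace.single i 1)‖ ≤ N := by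
    intro i
    have h1 : ‖fderivWithin ℝ (fun y => ξ y - ξ' y) s y (EuclideanSpace.single i 1)‖
        ≤ ⨆ x : s, ‖fderivWithin ℝ (fun y => ξ y - ξ' y) s x.1 (EuclideanSpace.single i 1)‖ :=
      le_ciSup (hdbdd i) (⟨y, hy⟩ : s)
    have h2 : (⨆ x : s, ‖fderivWithin ℝ (fun y => ξ y - ξ' y) s x.1 (EuclideanSpace.single i 1)‖)
        ≤ ⨆ j : Fin d, ⨆ x : s,
          ‖fderivWithin ℝ (fun y => ξ y - ξ' y) s x.1 (EuclideanSpace.single j 1)‖ :=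
      le_ciSup (f := fun j : Fin d => ⨆ x : s,
        ‖fderivWithin ℝ (fun y => ξ y - ξ' y) s x.1 (EuclideanSpace.single j 1)‖)
        (Set.Finite.bddAbove (Set.finite_range _)) i
    exact le_trans (le_trans h1 h2) (le_max_right _ _)
  -- compute the derivative
  set u := fderivWithin ℝ ξ s y with hu
  set u' := fderivWithin ℝ ξ' s y with hu'
  have hlog1 : HasFDerivWithinAt (fun z => Real.log (ξ z)) ((ξ y)⁻¹ • u) s y :=
    (Real.hasDerivAt_log (hpos y hy).ne').comp_hasFDerivWithinAt y (hdiff y hy).hasFDerivWithinAt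
  have hlog2 : HasFDerivWithinAt (fun z => Real.log (ξ' z)) ((ξ' y)⁻¹ • u') s y :=
    (Real.hasDerivAt_log (hpos' y hy).ne').comp_hasFDerivWithinAt y (hdiff' y hy).hasFDerivWithinAt
  have hlog : HasFDerivWithinAt (fun z => Real.log (ξ z / ξ' z))
      ((ξ y)⁻¹ • u - (ξ' y)⁻¹ • u') s y := by
    refine (hlog1.sub hlog2).congr (fun z hz => ?_) ?_
    · exact Real.log_div (hpos z hz).ne' (hpos' z hz).ne'
    · exact Real.log_div (hpos y hy).ne' (hpos' y hy).ne'
  have hfd : fderivWithin ℝ (fun z => Real.log (ξ z / ξ' z)) s y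
      = (ξ y)⁻¹ • u - (ξ' y)⁻¹ • u' := hlog.fderivWithin (hUD y hy)
  rw [hfd]
  have hsplit : (ξ y)⁻¹ • u - (ξ' y)⁻¹ • u'
      = (ξ y)⁻¹ • (u - u') + ((ξ y)⁻¹ - (ξ' y)⁻¹) • u' := by module
  rw [hsplit]
  have hBy := (hξbd y hy).1
  have hBy' := (hξ'bd y hy).1
  have hinv : (ξ y)⁻¹ ≤ B⁻¹ := inv_anti₀ hB0 hBy
  have huu' : ‖u - u'‖ ≤ Real.sqrt d * N := by
    rw [← hDsub y hy]
    exact opnorm_le_sqrt _ hN0 hder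
  have hinvdiff : |(ξ y)⁻¹ - (ξ' y)⁻¹| ≤ N / B ^ 2 := by
    have he : (ξ y)⁻¹ - (ξ' y)⁻¹ = (ξ' y - ξ y) / (ξ y * ξ' y) :=
      inv_sub_inv (hpos y hy).ne' (hpos' y hy).ne'
    rw [he, abs_div, abs_of_pos (mul_pos (hpos y hy) (hpos' y hy))]
    apply div_le_div₀ hN0 _ (by positivity) _
    · rw [abs_sub_comm]; exact hval y hy
    · rw [sq]; exact mul_le_mul hBy hBy' (le_of_lt hB0) (le_of_lt (hpos y hy))
  calc ‖(ξ y)⁻¹ • (u - u') + ((ξ y)⁻¹ - (ξ' y)⁻¹) • u'‖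
      ≤ ‖(ξ y)⁻¹ • (u - u')‖ + ‖((ξ y)⁻¹ - (ξ' y)⁻¹) • u'‖ := norm_add_le _ _
    _ = |(ξ y)⁻¹| * ‖u - u'‖ + |(ξ y)⁻¹ - (ξ' y)⁻¹| * ‖u'‖ := by
        rw [norm_smul, norm_smul, Real.norm_eq_abs, Real.norm_eq_abs]
    _ ≤ B⁻¹ * (Real.sqrt d * N) + (N / B ^ 2) * C₁ := by
        apply add_le_add
        · apply mul_le_mul _ huu' (norm_nonneg _) (by positivity)
          rw [abs_of_pos (inv_pos.mpr (hpos y hy))]; exact hinv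
        · exact mul_le_mul hinvdiff (hξ'D y hy) (norm_nonneg _) (by positivity)
    _ = (C₁ / B ^ 2 + Real.sqrt d / B) * N := by
        field_simp
        ring
  done
end
end

section
/- Assume the data process (Y_i) satisfies the Chazottes–Gouëzel concentration property with constants C > 0 and L > 0, and let μ = g_*ν. Then for every n ∈ ℕ and all t ≥ 0: P(ε^μ_gen(n) − E[ε^μ_gen(n)] ≥ t) ≤ exp(−γ̂₃ n t²), where γ̂₃ = B²/(2 C L² C₁²) and ε^μ_gen(n) = sup_{ξ∈H^D} |L̂^μ(ξ,n) − L^μ(ξ)|. -/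
open MeasureTheory Real Set
open scoped ENNReal NNReal

noncomputable section

/-- `L^μ(ξ)`. -/
def Lmu {d : ℕ} (μ : Measure (Euc d)) (ξ : Euc d → ℝ) : ℝ := ∫ y, Real.log (ξ y) ∂μ

/-- `L̂^μ(ξ,n)` for a realization `Y` of the data. -/
def empLmu {d : ℕ} (Y : ℕ → Euc d) (n : ℕ) (ξ : Euc d → ℝ) : ℝ :=
  (n : ℝ)⁻¹ * ∑ i ∈ Finset.range n, Real.log (ξ (Y i))

/-- Generalization error `ε^μ_gen(n) = sup_{ξ∈H^D} |L̂^μ(ξ,n) − L^μ(ξ)|` as a random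
variable on `Ω`. -/
def egenMu {d : ℕ} {Ω : Type*} (HD : Set (Euc d → ℝ)) (μ : Measure (Euc d))
    (Y : ℕ → Ω → Euc d) (n : ℕ) (ω : Ω) : ℝ :=
  ⨆ ξ : HD, |empLmu (fun i => Y i ω) n ξ.1 - Lmu μ ξ.1|


namespace Stmt13Aux

lemma convex_cube (d : ℕ) : Convex ℝ (cube d) := by
  intro x hx y hy a b ha hb hab i
  have hxi := hx i; have hyi := hy i
  simp only [Set.mem_Icc] at hxi hyi ⊢
  have hpt : (a • x + b • y) i = a * x i + b * y i := rfl
  rw [hpt]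
  refine ⟨add_nonneg (mul_nonneg ha hxi.1) (mul_nonneg hb hyi.1), ?_⟩
  have h1 : a * x i ≤ a * 1 := mul_le_mul_of_nonneg_left hxi.2 ha
  have h2 : b * y i ≤ b * 1 := mul_le_mul_of_nonneg_left hyi.2 hb
  nlinarith

lemma measurableSet_cube (d : ℕ) : MeasurableSet (cube d) := by
  have h : cube d = ⋂ i, (fun x : Euc d => x i) ⁻¹' Set.Icc 0 1 := by
    ext x; simp [cube]
  rw [h]
  exact MeasurableSet.iInter fun i => (EuclideanSpace.proj (𝕜 := ℝ) i).continuous.measurable measurableSet_Icc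

lemma isClosed_cube (d : ℕ) : IsClosed (cube d) := by
  have h : cube d = ⋂ i, (EuclideanSpace.proj (𝕜 := ℝ) i) ⁻¹' Set.Icc (0:ℝ) 1 := by
    ext x; simp [cube]
  rw [h]
  exact isClosed_iInter fun i =>
    IsClosed.preimage (EuclideanSpace.proj i).continuous isClosed_Icc

lemma isCompact_cube (d : ℕ) : IsCompact (cube d) := by
  refine Metric.isCompact_of_isClosed_isBounded (isClosed_cube d) ?_
  rw [Metric.isBounded_iff]
  refine ⟨Real.sqrt d, ?_⟩
  intro x hx y hy
  rw [EuclideanSpace.dist_eq]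
  have h1 : ∀ i, dist (x i) (y i) ^ 2 ≤ 1 := by
    intro i
    have hxi := hx i; have hyi := hy i
    simp only [Set.mem_Icc] at hxi hyi
    rw [Real.dist_eq]
    have h2 : |x i - y i| ≤ 1 := by rw [abs_le]; constructor <;> linarith
    nlinarith [abs_nonneg (x i - y i), sq_abs (x i - y i)]
  calc Real.sqrt (∑ i, dist (x i) (y i) ^ 2) ≤ Real.sqrt (∑ _i : Fin d, (1:ℝ)) :=
      Real.sqrt_le_sqrt (Finset.sum_le_sum fun i _ => h1 i)
    _ = Real.sqrt d := by
        rw [Finset.sum_const, Finset.card_univ, Fintype.card_fin, nsmul_eq_mul, mul_one]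

lemma log_lip {B u v : ℝ} (hB : 0 < B) (hu : B ≤ u) (hv : B ≤ v) :
    |Real.log u - Real.log v| ≤ B⁻¹ * |u - v| := by
  have key : ∀ a b : ℝ, B ≤ a → B ≤ b → a ≤ b →
      Real.log b - Real.log a ≤ B⁻¹ * (b - a) := by
    intro a b ha hb hab
    have ha0 : 0 < a := lt_of_lt_of_le hB ha
    have hb0 : 0 < b := lt_of_lt_of_le hB hb
    rw [← Real.log_div hb0.ne' ha0.ne']
    have h1 := Real.log_le_sub_one_of_pos (div_pos hb0 ha0)
    have h2 : b / a - 1 = (b - a) / a := by field_simp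
    rw [h2] at h1
    refine h1.trans ?_
    rw [div_eq_inv_mul]
    have h3 : a⁻¹ ≤ B⁻¹ := inv_anti₀ hB ha
    exact mul_le_mul_of_nonneg_right h3 (sub_nonneg.2 hab)
  have main : ∀ a b : ℝ, B ≤ a → B ≤ b → Real.log a - Real.log b ≤ B⁻¹ * |a - b| := by
    intro a b ha hb
    rcases le_total a b with h | h
    · have h1 : Real.log a ≤ Real.log b := Real.log_le_log (lt_of_lt_of_le hB ha) h
      have h0 : 0 ≤ B⁻¹ * |a - b| := by positivity
      linarith
    · have h1 := key b a hb ha h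
      rw [abs_of_nonneg (sub_nonneg.2 h)]
      linarith
  rw [abs_sub_le_iff]
  exact ⟨main u v hu hv, by rw [abs_sub_comm]; exact main v u hv hu⟩

lemma hd_log_lip {d k : ℕ} (hk : 2 ≤ k) {α B C₁ C₂ : ℝ} (hB0 : 0 < B)
    {ξ : Euc d → ℝ} (hξ : memHD d k α B C₁ C₂ ξ) {y z : Euc d}
    (hy : y ∈ cube d) (hz : z ∈ cube d) :
    |Real.log (ξ y) - Real.log (ξ z)| ≤ B⁻¹ * C₁ * ‖y - z‖ := by
  have hdiff : DifferentiableOn ℝ ξ (cube d) := by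
    refine (hξ.2.2.2.1).differentiableOn ?_
    exact_mod_cast (by omega : k - 1 ≠ 0)
  have hlip : |ξ y - ξ z| ≤ C₁ * ‖y - z‖ := by
    have h := (convex_cube d).norm_image_sub_le_of_norm_fderivWithin_le hdiff
      hξ.2.2.1 hz hy
    simpa [Real.norm_eq_abs] using h
  have h1 := log_lip hB0 (hξ.2.1 y hy).1 (hξ.2.1 z hz).1
  calc |Real.log (ξ y) - Real.log (ξ z)| ≤ B⁻¹ * |ξ y - ξ z| := h1
    _ ≤ B⁻¹ * (C₁ * ‖y - z‖) :=
        mul_le_mul_of_nonneg_left hlip (inv_nonneg.2 hB0.le)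
    _ = B⁻¹ * C₁ * ‖y - z‖ := by ring

lemma hd_lip {d k : ℕ} (hk : 2 ≤ k) {α B C₁ C₂ : ℝ}
    {ξ : Euc d → ℝ} (hξ : memHD d k α B C₁ C₂ ξ) {y z : Euc d}
    (hy : y ∈ cube d) (hz : z ∈ cube d) :
    |ξ y - ξ z| ≤ C₁ * ‖y - z‖ := by
  have hdiff : DifferentiableOn ℝ ξ (cube d) := by
    refine (hξ.2.2.2.1).differentiableOn ?_
    exact_mod_cast (by omega : k - 1 ≠ 0)
  have h := (convex_cube d).norm_image_sub_le_of_norm_fderivWithin_le hdiff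
    hξ.2.2.1 hz hy
  simpa [Real.norm_eq_abs] using h

lemma abs_iSup_sub_iSup_le {ι : Sort*} {f g : ι → ℝ} {c : ℝ} (hc : 0 ≤ c)
    (hf : BddAbove (Set.range f)) (hg : BddAbove (Set.range g))
    (h : ∀ i, |f i - g i| ≤ c) : |(⨆ i, f i) - ⨆ i, g i| ≤ c := by
  rcases isEmpty_or_nonempty ι with hι | hι
  · simpa [Real.iSup_of_isEmpty] using hc
  · rw [abs_sub_le_iff]
    constructor
    · rw [sub_le_iff_le_add]
      refine ciSup_le fun i => ?_
      have h1 := (abs_sub_le_iff.1 (h i)).1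
      have h2 := le_ciSup hg i
      linarith
    · rw [sub_le_iff_le_add]
      refine ciSup_le fun i => ?_
      have h1 := (abs_sub_le_iff.1 (h i)).2
      have h2 := le_ciSup hf i
      linarith

end Stmt13Aux

open Stmt13Aux in
/-- **Concentration around the mean.** Under the Chazottes–Gouëzel concentration
property, `P(ε^μ_gen(n) − E[ε^μ_gen(n)] ≥ t) ≤ exp(−γ̂₃ n t²)` with
`γ̂₃ = B²/(2CL²C₁²)`. -/
theorem statement13 {d k : ℕ} (hd : 0 < d) (hk : 2 ≤ k) {α B C₁ C₂ C L : ℝ}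
    (hα : α ∈ Set.Ioc (0:ℝ) 1) (hB : B ∈ Set.Ioo (0:ℝ) (1/2)) (hC₁ : 0 < C₁)
    (hC₂ : 0 < C₂) (hC : 0 < C) (hL : 0 < L)
    {Ω : Type*} [MeasurableSpace Ω] (P : Measure Ω) [IsProbabilityMeasure P]
    {M : Type*} [MetricSpace M] [MeasurableSpace M] [BorelSpace M]
    (T : M → M) (hT : Measurable T)
    (ν : Measure M) [IsProbabilityMeasure ν] (hinv : Measure.map T ν = ν)
    (g : M → Euc d) (hg : LipschitzWith (Real.toNNReal L) g)
    (hgcube : ∀ x, g x ∈ cube d)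
    (X : Ω → M) (hX : Measurable X) (hlaw : Measure.map X P = ν)
    (hCG : ∀ (m : ℕ) (K : (Fin m → M) → ℝ) (Lc : Fin m → ℝ),
      (∀ (x : Fin m → M) (i : Fin m) (a : M),
        |K (Function.update x i a) - K x| ≤ Lc i * dist a (x i)) →
      ∀ τ : ℝ,
        (∫ ω, Real.exp (τ * (K (fun i => T^[(i : ℕ)] (X ω)) -
            ∫ ω', K (fun i => T^[(i : ℕ)] (X ω')) ∂P)) ∂P) ≤
          Real.exp (τ ^ 2 * C * (∑ i, (Lc i) ^ 2) / 2)) :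
    ∀ n : ℕ, 0 < n → ∀ t : ℝ, 0 ≤ t →
      P {ω : Ω |
          (∫ ω', egenMu {ξ : Euc d → ℝ | memHD d k α B C₁ C₂ ξ} (Measure.map g ν)
              (fun i ω'' => g (T^[i] (X ω''))) n ω' ∂P) + t ≤
            egenMu {ξ : Euc d → ℝ | memHD d k α B C₁ C₂ ξ} (Measure.map g ν)
              (fun i ω'' => g (T^[i] (X ω''))) n ω} ≤
        ENNReal.ofReal (Real.exp (-(B ^ 2 / (2 * C * L ^ 2 * C₁ ^ 2)) * n * t ^ 2)) := by
  intro n hn t ht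
  obtain ⟨hB0, hB2⟩ := hB
  have hB1 : B < 1 := lt_trans hB2 (by norm_num)
  have hn' : (n:ℝ) ≠ 0 := Nat.cast_ne_zero.2 hn.ne'
  have hnpos : (0:ℝ) < n := Nat.cast_pos.2 hn
  have hgm : Measurable g := hg.continuous.measurable
  set HD : Set (Euc d → ℝ) := {ξ : Euc d → ℝ | memHD d k α B C₁ C₂ ξ} with hHD
  set μ : Measure (Euc d) := Measure.map g ν with hμ
  have hμprob : IsProbabilityMeasure μ := Measure.isProbabilityMeasure_map hgm.aemeasurable
  have hμcube : ∀ᵐ y ∂μ, y ∈ cube d := by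
    rw [hμ]
    exact (MeasureTheory.ae_map_iff hgm.aemeasurable (measurableSet_cube d)).2
      (ae_of_all ν hgcube)
  set LB : ℝ := -Real.log B with hLB
  have hLB0 : 0 ≤ LB := by
    have := Real.log_neg hB0 hB1; rw [hLB]; linarith
  have hlog : ∀ ξ ∈ HD, ∀ y ∈ cube d, |Real.log (ξ y)| ≤ LB := by
    intro ξ hξ y hy
    obtain ⟨h1, h2⟩ := hξ.2.1 y hy
    have hpos : 0 < ξ y := (hξ.1 y hy).1
    have hlt1 : ξ y < 1 := (hξ.1 y hy).2
    have hup : Real.log (ξ y) ≤ 0 := Real.log_nonpos hpos.le hlt1.le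
    have hlo : Real.log B ≤ Real.log (ξ y) := Real.log_le_log hB0 h1
    rw [abs_le]
    exact ⟨by rw [hLB]; linarith, le_trans hup hLB0⟩
  have hLmu : ∀ ξ ∈ HD, |Lmu μ ξ| ≤ LB := by
    intro ξ hξ
    have hb : ∀ᵐ y ∂μ, ‖Real.log (ξ y)‖ ≤ LB := by
      filter_upwards [hμcube] with y hy
      simpa [Real.norm_eq_abs] using hlog ξ hξ y hy
    have h := norm_integral_le_of_norm_le_const (μ := μ) hb
    simpa [Lmu, Real.norm_eq_abs, measure_univ] using h
  have hemp : ∀ ξ ∈ HD, ∀ x : Fin n → M,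
      |(n:ℝ)⁻¹ * ∑ i : Fin n, Real.log (ξ (g (x i)))| ≤ LB := by
    intro ξ hξ x
    rw [abs_mul, abs_inv, Nat.abs_cast]
    have h1 : |∑ i : Fin n, Real.log (ξ (g (x i)))| ≤ ∑ _i : Fin n, LB :=
      (Finset.abs_sum_le_sum_abs _ _).trans
        (Finset.sum_le_sum fun i _ => hlog ξ hξ _ (hgcube _))
    rw [Finset.sum_const, Finset.card_univ, Fintype.card_fin, nsmul_eq_mul] at h1
    calc ((n:ℝ))⁻¹ * |∑ i : Fin n, Real.log (ξ (g (x i)))|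
        ≤ (n:ℝ)⁻¹ * ((n:ℝ) * LB) := by gcongr
      _ = LB := by field_simp
  set F : HD → (Fin n → M) → ℝ :=
    fun ξ x => |(n:ℝ)⁻¹ * ∑ i : Fin n, Real.log (ξ.1 (g (x i))) - Lmu μ ξ.1| with hF
  set K : (Fin n → M) → ℝ := fun x => ⨆ ξ : HD, F ξ x with hK
  have hFb : ∀ (ξ : HD) (x : Fin n → M), F ξ x ≤ 2 * LB := by
    intro ξ x
    have h1 := hemp ξ.1 ξ.2 x
    have h2 := hLmu ξ.1 ξ.2
    have h3 := abs_sub ((n:ℝ)⁻¹ * ∑ i : Fin n, Real.log (ξ.1 (g (x i)))) (Lmu μ ξ.1)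
    simp only [hF]; linarith
  have hbdd : ∀ x : Fin n → M, BddAbove (Set.range fun ξ : HD => F ξ x) :=
    fun x => ⟨2 * LB, by rintro r ⟨ξ, rfl⟩; exact hFb ξ x⟩
  have hK0 : ∀ x : Fin n → M, 0 ≤ K x := fun x => Real.iSup_nonneg fun ξ => abs_nonneg _
  have hKb : ∀ x : Fin n → M, K x ≤ 2 * LB := fun x =>
    Real.iSup_le (fun ξ => hFb ξ x) (by linarith)
  have hFdiff : ∀ (ξ : HD) (x y : Fin n → M),
      |F ξ x - F ξ y| ≤ B⁻¹ * C₁ * L * (n:ℝ)⁻¹ * ∑ i : Fin n, dist (x i) (y i) := by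
    intro ξ x y
    simp only [hF]
    set A1 := (n:ℝ)⁻¹ * ∑ i : Fin n, Real.log (ξ.1 (g (x i))) with hA1
    set A2 := (n:ℝ)⁻¹ * ∑ i : Fin n, Real.log (ξ.1 (g (y i))) with hA2
    have h1 : abs (|A1 - Lmu μ ξ.1| - |A2 - Lmu μ ξ.1|) ≤ |A1 - A2| := by
      have e : A1 - A2 = (A1 - Lmu μ ξ.1) - (A2 - Lmu μ ξ.1) := by ring
      rw [e]; exact abs_abs_sub_abs_le_abs_sub _ _
    refine h1.trans ?_
    rw [hA1, hA2, ← mul_sub, ← Finset.sum_sub_distrib, abs_mul, abs_inv, Nat.abs_cast]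
    have h2 : |∑ i : Fin n, (Real.log (ξ.1 (g (x i))) - Real.log (ξ.1 (g (y i))))|
        ≤ ∑ i : Fin n, B⁻¹ * C₁ * L * dist (x i) (y i) := by
      refine (Finset.abs_sum_le_sum_abs _ _).trans (Finset.sum_le_sum fun i _ => ?_)
      have h3 := hd_log_lip hk hB0 ξ.2 (hgcube (x i)) (hgcube (y i))
      refine h3.trans ?_
      have h4 : ‖g (x i) - g (y i)‖ ≤ L * dist (x i) (y i) := by
        rw [← dist_eq_norm]
        have h5 := hg.dist_le_mul (x i) (y i)
        rwa [Real.coe_toNNReal L hL.le] at h5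
      calc B⁻¹ * C₁ * ‖g (x i) - g (y i)‖
          ≤ B⁻¹ * C₁ * (L * dist (x i) (y i)) := by gcongr
        _ = B⁻¹ * C₁ * L * dist (x i) (y i) := by ring
    calc ((n:ℝ))⁻¹ * |∑ i : Fin n, (Real.log (ξ.1 (g (x i))) - Real.log (ξ.1 (g (y i))))|
        ≤ (n:ℝ)⁻¹ * ∑ i : Fin n, B⁻¹ * C₁ * L * dist (x i) (y i) := by gcongr
      _ = B⁻¹ * C₁ * L * (n:ℝ)⁻¹ * ∑ i : Fin n, dist (x i) (y i) := by
          rw [← Finset.mul_sum]; ring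
  have hKdiff : ∀ x y : Fin n → M,
      |K x - K y| ≤ B⁻¹ * C₁ * L * (n:ℝ)⁻¹ * ∑ i : Fin n, dist (x i) (y i) := by
    intro x y
    have hc0 : 0 ≤ B⁻¹ * C₁ * L * (n:ℝ)⁻¹ * ∑ i : Fin n, dist (x i) (y i) := by
      have hs0 : 0 ≤ ∑ i : Fin n, dist (x i) (y i) :=
        Finset.sum_nonneg fun i _ => dist_nonneg
      positivity
    exact abs_iSup_sub_iSup_le hc0 (hbdd x) (hbdd y) fun ξ => hFdiff ξ x y
  have hsep : ∀ (x : Fin n → M) (i : Fin n) (a : M),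
      |K (Function.update x i a) - K x| ≤ (B⁻¹ * C₁ * L * (n:ℝ)⁻¹) * dist a (x i) := by
    intro x i a
    have h := hKdiff (Function.update x i a) x
    have hsum : (∑ j : Fin n, dist (Function.update x i a j) (x j)) = dist a (x i) := by
      rw [Finset.sum_eq_single i]
      · rw [Function.update_self]
      · intro j _ hj; simp [Function.update_of_ne hj]
      · intro hi; exact absurd (Finset.mem_univ i) hi
    rwa [hsum] at h
  -- separability of the hypothesis class on the cube
  have hξcont : ∀ ξ : Euc d → ℝ, ξ ∈ HD → ContinuousOn ξ (cube d) := fun ξ hξ =>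
    (hξ.2.2.2.1).continuousOn
  haveI : CompactSpace (cube d) := isCompact_iff_compactSpace.1 (isCompact_cube d)
  have hval : ∀ (ξ : Euc d → ℝ), ξ ∈ HD → ∀ y : (cube d), ξ y ∈ Set.Icc B (1-B) :=
    fun ξ hξ y => ⟨(hξ.2.1 y.1 y.2).1, (hξ.2.1 y.1 y.2).2⟩
  set Φ : HD → (BoundedContinuousFunction ↥(cube d) ℝ) := fun ξ =>
    BoundedContinuousFunction.mkOfBound
      ⟨(cube d).restrict ξ.1, (hξcont ξ.1 ξ.2).restrict⟩ 1
      (fun y z => by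
        have h1 := hval ξ.1 ξ.2 y
        have h2 := hval ξ.1 ξ.2 z
        simp only [Set.mem_Icc] at h1 h2
        rw [Real.dist_eq, abs_le]
        show -1 ≤ ξ.1 y - ξ.1 z ∧ ξ.1 y - ξ.1 z ≤ 1
        constructor
        · linarith [h1.1, h2.2, hB0.le]
        · linarith [h1.2, h2.1, hB0.le]) with hΦ
  have hΦdist : ∀ (ξ η : HD) (y : Euc d), (hy : y ∈ cube d) →
      |ξ.1 y - η.1 y| ≤ dist (Φ ξ) (Φ η) := by
    intro ξ η y hy
    have h := BoundedContinuousFunction.dist_coe_le_dist (f := Φ ξ) (g := Φ η) ⟨y, hy⟩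
    have e1 : (Φ ξ) ⟨y, hy⟩ = ξ.1 y := rfl
    have e2 : (Φ η) ⟨y, hy⟩ = η.1 y := rfl
    rwa [e1, e2, Real.dist_eq] at h
  have hrestrict : μ.restrict (cube d) = μ :=
    Measure.restrict_eq_self_of_ae_mem hμcube
  have hintlog : ∀ ξ : HD, Integrable (fun y => Real.log (ξ.1 y)) μ := by
    intro ξ
    have hcont : ContinuousOn (fun y => Real.log (ξ.1 y)) (cube d) :=
      ContinuousOn.log (hξcont ξ.1 ξ.2) (fun y hy => ((ξ.2).1 y hy).1.ne')
    have hsm : AEStronglyMeasurable (fun y => Real.log (ξ.1 y)) μ := by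
      rw [← hrestrict]
      exact hcont.aestronglyMeasurable (measurableSet_cube d)
    refine ⟨hsm, ?_⟩
    apply HasFiniteIntegral.of_bounded (C := LB)
    filter_upwards [hμcube] with y hy
    simpa [Real.norm_eq_abs] using hlog ξ.1 ξ.2 y hy
  have hLdiff : ∀ ξ η : HD, |Lmu μ ξ.1 - Lmu μ η.1| ≤ B⁻¹ * dist (Φ ξ) (Φ η) := by
    intro ξ η
    have h1 : Lmu μ ξ.1 - Lmu μ η.1
        = ∫ y, (Real.log (ξ.1 y) - Real.log (η.1 y)) ∂μ := by
      rw [Lmu, Lmu, ← integral_sub (hintlog ξ) (hintlog η)]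
    rw [h1]
    have h2 := norm_integral_le_of_norm_le_const (μ := μ)
      (C := B⁻¹ * dist (Φ ξ) (Φ η)) (f := fun y => Real.log (ξ.1 y) - Real.log (η.1 y)) ?_
    · simpa [Real.norm_eq_abs, measure_univ] using h2
    · filter_upwards [hμcube] with y hy
      rw [Real.norm_eq_abs]
      calc |Real.log (ξ.1 y) - Real.log (η.1 y)|
          ≤ B⁻¹ * |ξ.1 y - η.1 y| :=
            log_lip hB0 ((ξ.2).2.1 y hy).1 ((η.2).2.1 y hy).1
        _ ≤ B⁻¹ * dist (Φ ξ) (Φ η) :=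
            mul_le_mul_of_nonneg_left (hΦdist ξ η y hy) (inv_nonneg.2 hB0.le)
  have hFclose : ∀ (ξ η : HD) (x : Fin n → M),
      |F ξ x - F η x| ≤ 2 * B⁻¹ * dist (Φ ξ) (Φ η) := by
    intro ξ η x
    simp only [hF]
    set c1 := (n:ℝ)⁻¹ * ∑ i : Fin n, Real.log (ξ.1 (g (x i))) with hc1
    set c2 := (n:ℝ)⁻¹ * ∑ i : Fin n, Real.log (η.1 (g (x i))) with hc2
    have h1 : abs (|c1 - Lmu μ ξ.1| - |c2 - Lmu μ η.1|)
        ≤ |c1 - c2| + |Lmu μ ξ.1 - Lmu μ η.1| := by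
      have e1 := abs_abs_sub_abs_le_abs_sub (c1 - Lmu μ ξ.1) (c2 - Lmu μ η.1)
      have e2 : (c1 - Lmu μ ξ.1) - (c2 - Lmu μ η.1)
          = (c1 - c2) - (Lmu μ ξ.1 - Lmu μ η.1) := by ring
      rw [e2] at e1
      exact e1.trans (abs_sub _ _)
    refine h1.trans ?_
    have h2 : |c1 - c2| ≤ B⁻¹ * dist (Φ ξ) (Φ η) := by
      rw [hc1, hc2, ← mul_sub, ← Finset.sum_sub_distrib, abs_mul, abs_inv, Nat.abs_cast]
      have h3 : |∑ i : Fin n, (Real.log (ξ.1 (g (x i))) - Real.log (η.1 (g (x i))))|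
          ≤ ∑ _i : Fin n, B⁻¹ * dist (Φ ξ) (Φ η) := by
        refine (Finset.abs_sum_le_sum_abs _ _).trans (Finset.sum_le_sum fun i _ => ?_)
        calc |Real.log (ξ.1 (g (x i))) - Real.log (η.1 (g (x i)))|
            ≤ B⁻¹ * |ξ.1 (g (x i)) - η.1 (g (x i))| :=
              log_lip hB0 ((ξ.2).2.1 _ (hgcube _)).1 ((η.2).2.1 _ (hgcube _)).1
          _ ≤ B⁻¹ * dist (Φ ξ) (Φ η) :=
              mul_le_mul_of_nonneg_left (hΦdist ξ η _ (hgcube _)) (inv_nonneg.2 hB0.le)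
      rw [Finset.sum_const, Finset.card_univ, Fintype.card_fin, nsmul_eq_mul] at h3
      calc ((n:ℝ))⁻¹ * |∑ i : Fin n, (Real.log (ξ.1 (g (x i))) - Real.log (η.1 (g (x i))))|
          ≤ (n:ℝ)⁻¹ * ((n:ℝ) * (B⁻¹ * dist (Φ ξ) (Φ η))) := by gcongr
        _ = B⁻¹ * dist (Φ ξ) (Φ η) := by field_simp
    have h4 := hLdiff ξ η
    linarith
  have hA_sep : TopologicalSpace.IsSeparable (Set.range Φ) := by
    have hcpt : IsCompact (closure (Set.range Φ)) := by
      refine BoundedContinuousFunction.arzela_ascoli (Set.Icc B (1-B)) isCompact_Icc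
        (Set.range Φ) ?_ ?_
      · rintro f y ⟨ξ, rfl⟩
        exact hval ξ.1 ξ.2 y
      · apply Metric.equicontinuous_of_continuity_modulus (fun s => C₁ * s)
        · have : Filter.Tendsto (fun s : ℝ => C₁ * s) (nhds 0) (nhds (C₁ * 0)) :=
            (continuous_const.mul continuous_id).tendsto 0
          simpa using this
        · rintro y z ⟨f, hf⟩
          obtain ⟨ξ, rfl⟩ := hf
          have e1 : (Φ ξ) y = ξ.1 y.1 := rfl
          have e2 : (Φ ξ) z = ξ.1 z.1 := rfl
          rw [Real.dist_eq]
          calc |(Φ ξ) y - (Φ ξ) z| = |ξ.1 y.1 - ξ.1 z.1| := by rw [e1, e2]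
            _ ≤ C₁ * ‖y.1 - z.1‖ := hd_lip hk ξ.2 y.2 z.2
            _ = C₁ * dist y z := by rw [Subtype.dist_eq, dist_eq_norm]
    exact hcpt.isSeparable.mono subset_closure
  haveI hsepA : TopologicalSpace.SeparableSpace (Set.range Φ) := hA_sep.separableSpace
  obtain ⟨Dc, hDc_ct, hDc_dense⟩ :=
    TopologicalSpace.exists_countable_dense (Set.range Φ)
  haveI := hDc_ct.to_subtype
  set ψ : Dc → HD := fun p => (p.1.2).choose with hψdef
  have hψ : ∀ p : Dc, Φ (ψ p) = p.1.1 := fun p => (p.1.2).choose_spec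
  have hKD : ∀ x : Fin n → M, K x = ⨆ p : Dc, F (ψ p) x := by
    intro x
    rcases isEmpty_or_nonempty (↥HD) with hH | hH
    · haveI : IsEmpty ↥Dc := by
        by_contra h
        rw [not_isEmpty_iff] at h
        obtain ⟨p⟩ := h
        exact (hH.false (ψ p)).elim
      simp only [hK]
      rw [Real.iSup_of_isEmpty, Real.iSup_of_isEmpty]
    · apply le_antisymm
      · have hDbdd : BddAbove (Set.range fun p : Dc => F (ψ p) x) :=
          ⟨2 * LB, by rintro r ⟨p, rfl⟩; exact hFb _ x⟩
        refine le_of_forall_pos_le_add ?_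
        intro ε hε
        refine ciSup_le fun ξ => ?_
        have hδ : 0 < B * ε / 2 := by positivity
        obtain ⟨p, hpb, hpD⟩ := Metric.dense_iff.1 hDc_dense
          ⟨Φ ξ, Set.mem_range_self ξ⟩ (B * ε / 2) hδ
        set q : Dc := ⟨p, hpD⟩ with hq
        have hdq : dist (Φ ξ) (Φ (ψ q)) < B * ε / 2 := by
          have h1 : Φ (ψ q) = p.1 := hψ q
          have h2 : dist p (⟨Φ ξ, Set.mem_range_self ξ⟩ : Set.range Φ) < B * ε / 2 :=
            Metric.mem_ball.1 hpb
          rw [Subtype.dist_eq] at h2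
          rw [h1, dist_comm]
          exact h2
        have h5 := hFclose ξ (ψ q) x
        have h6 : F ξ x - F (ψ q) x ≤ 2 * B⁻¹ * dist (Φ ξ) (Φ (ψ q)) :=
          (abs_sub_le_iff.1 h5).1
        have h7 : F (ψ q) x ≤ ⨆ p : Dc, F (ψ p) x := le_ciSup hDbdd q
        have h8 : 2 * B⁻¹ * dist (Φ ξ) (Φ (ψ q)) ≤ 2 * B⁻¹ * (B * ε / 2) := by
          gcongr
        have h9 : 2 * B⁻¹ * (B * ε / 2) = ε := by field_simp
        linarith
      · exact Real.iSup_le (fun p => le_ciSup (hbdd x) (ψ p)) (hK0 x)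
  have hWm : Measurable (fun ω => K (fun i : Fin n => T^[(i:ℕ)] (X ω))) := by
    have hmeas1 : ∀ ξ : HD, Measurable fun m : M => ξ.1 (g m) := by
      intro ξ
      have h1 : Measurable fun m : M => (⟨g m, hgcube m⟩ : (cube d)) := hgm.subtype_mk
      have h2 : Measurable (Φ ξ) := (Φ ξ).continuous.measurable
      exact h2.comp h1
    have hmeas2 : ∀ p : Dc,
        Measurable fun ω => F (ψ p) (fun i : Fin n => T^[(i:ℕ)] (X ω)) := by
      intro p
      simp only [hF]
      apply Measurable.abs
      apply Measurable.sub ?_ measurable_const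
      apply Measurable.const_mul
      apply Finset.measurable_sum
      intro i _
      exact (Real.measurable_log.comp (hmeas1 (ψ p))).comp ((hT.iterate (i:ℕ)).comp hX)
    have he : (fun ω => K (fun i : Fin n => T^[(i:ℕ)] (X ω)))
        = fun ω => ⨆ p : Dc, F (ψ p) (fun i : Fin n => T^[(i:ℕ)] (X ω)) := by
      funext ω; exact hKD _
    rw [he]
    exact Measurable.iSup hmeas2
  -- Chernoff / Markov argument
  set EK : ℝ := ∫ ω', K (fun i : Fin n => T^[(i:ℕ)] (X ω')) ∂P with hEK
  have hEKb : |EK| ≤ 2 * LB := by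
    rw [hEK]
    have h := norm_integral_le_of_norm_le_const (μ := P)
      (f := fun ω' => K (fun i : Fin n => T^[(i:ℕ)] (X ω'))) (C := 2 * LB)
      (ae_of_all _ fun ω' => by
        rw [Real.norm_eq_abs, abs_of_nonneg (hK0 _)]; exact hKb _)
    simpa [Real.norm_eq_abs, measure_univ] using h
  set Zv : Ω → ℝ := fun ω => K (fun i : Fin n => T^[(i:ℕ)] (X ω)) - EK with hZv
  have hZvm : Measurable Zv := hWm.sub measurable_const
  set τ : ℝ := B ^ 2 * n * t / (C * L ^ 2 * C₁ ^ 2) with hτ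
  have hτ0 : 0 ≤ τ := by rw [hτ]; positivity
  have hint : Integrable (fun ω => Real.exp (τ * Zv ω)) P := by
    refine Integrable.mono' (integrable_const (Real.exp (τ * (4 * LB))))
      ((Real.measurable_exp.comp (measurable_const.mul hZvm)).aestronglyMeasurable)
      (ae_of_all _ fun ω => ?_)
    rw [Real.norm_eq_abs, Real.abs_exp]
    refine Real.exp_le_exp.2 (mul_le_mul_of_nonneg_left ?_ hτ0)
    have h1 := hKb (fun i : Fin n => T^[(i:ℕ)] (X ω))
    have h2 := neg_abs_le EK
    have h3 := hK0 (fun i : Fin n => T^[(i:ℕ)] (X ω))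
    simp only [hZv]
    linarith [abs_le.1 hEKb]
  have hCGK := hCG n K (fun _ => B⁻¹ * C₁ * L * (n:ℝ)⁻¹) hsep τ
  rw [← hEK] at hCGK
  have hmgf : ProbabilityTheory.mgf Zv P τ
      ≤ Real.exp (τ ^ 2 * C * (∑ _i : Fin n, (B⁻¹ * C₁ * L * (n:ℝ)⁻¹) ^ 2) / 2) := hCGK
  have hmark := ProbabilityTheory.measure_ge_le_exp_mul_mgf (μ := P) (X := Zv) t hτ0 hint
  have hS : (∑ _i : Fin n, (B⁻¹ * C₁ * L * (n:ℝ)⁻¹) ^ 2)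
      = (n:ℝ) * (B⁻¹ * C₁ * L * (n:ℝ)⁻¹) ^ 2 := by
    rw [Finset.sum_const, Finset.card_univ, Fintype.card_fin, nsmul_eq_mul]
  have hexp : -τ * t + τ ^ 2 * C * ((n:ℝ) * (B⁻¹ * C₁ * L * (n:ℝ)⁻¹) ^ 2) / 2
      = -(B ^ 2 / (2 * C * L ^ 2 * C₁ ^ 2)) * n * t ^ 2 := by
    rw [hτ]
    have h1 : B ≠ 0 := hB0.ne'
    have h2 : C ≠ 0 := hC.ne'
    have h3 : L ≠ 0 := hL.ne'
    have h4 : C₁ ≠ 0 := hC₁.ne'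
    field_simp
    ring
  have hreal : Real.exp (-τ * t) * ProbabilityTheory.mgf Zv P τ
      ≤ Real.exp (-(B ^ 2 / (2 * C * L ^ 2 * C₁ ^ 2)) * n * t ^ 2) := by
    have hh := mul_le_mul_of_nonneg_left hmgf (Real.exp_pos (-τ * t)).le
    refine hh.trans ?_
    rw [← Real.exp_add, hS, hexp]
  have hWeg : ∀ ω, egenMu HD μ (fun i ω'' => g (T^[i] (X ω''))) n ω
      = K (fun i : Fin n => T^[(i:ℕ)] (X ω)) := by
    intro ω
    simp only [egenMu, hK, hF, empLmu]
    refine iSup_congr fun ξ => ?_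
    rw [Fin.sum_univ_eq_sum_range (fun i => Real.log (ξ.1 (g (T^[i] (X ω)))))]
  have hsetEq : {ω : Ω | (∫ ω', egenMu HD μ (fun i ω'' => g (T^[i] (X ω''))) n ω' ∂P) + t
        ≤ egenMu HD μ (fun i ω'' => g (T^[i] (X ω''))) n ω}
      = {ω : Ω | t ≤ Zv ω} := by
    have hEint : (∫ ω', egenMu HD μ (fun i ω'' => g (T^[i] (X ω''))) n ω' ∂P) = EK := by
      rw [hEK]; exact integral_congr_ae (ae_of_all _ hWeg)
    ext ω
    simp only [Set.mem_setOf_eq, hEint, hWeg ω, hZv]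
    constructor <;> intro h <;> linarith
  rw [hsetEq, ← ENNReal.ofReal_toReal (measure_ne_top P _)]
  exact ENNReal.ofReal_le_ofReal (hmark.trans hreal)
end
end
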